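/- arXiv:1209.0051 — 2 statements merged into one kernel-verified Lean document; each statement's English description precedes it below -/
import Mathlib

section
/- Let V be a finitely generated free Z[q,q⁻¹]-module with a pre-canonical structure possessing a canonical basis {b_c}. If v ∈ V satisfies ψ(v) = v and ⟨v,v⟩ ∈ 1 + q⁻¹Z[q⁻¹], then either v or -v is a canonical basis vector. -/
/-!
Statement 1: if `V` is a finitely generated free `ℤ[q,q⁻¹]`-module with a
pre-canonical structure possessing a canonical basis `{b_c}`, and `v ∈ V`
satisfies `ψ(v) = v` and `⟨v,v⟩ ∈ 1 + q⁻¹ℤ[q⁻¹]`, then `v` or `-v` is a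
canonical basis vector.  Here `ℤ[q,q⁻¹] = LaurentPolynomial ℤ` and
`ℤ((q⁻¹)) = LaurentSeries ℤ`, the Laurent-series variable `X` standing for `q⁻¹`.
-/

noncomputable section

open LaurentPolynomial HahnSeries
open scoped Classical

abbrev Rq : Type := LaurentPolynomial ℤ
abbrev Sq : Type := LaurentSeries ℤ

def bar : Rq ≃+* Rq := (LaurentPolynomial.invert (R := ℤ)).toRingEquiv

def qPow : Multiplicative ℤ →* Sq where
  toFun n := HahnSeries.single (-(Multiplicative.toAdd n)) (1 : ℤ)
  map_one' := by simpa using HahnSeries.single_zero_one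
  map_mul' a b := by
    rw [HahnSeries.single_mul_single, mul_one]
    congr 1
    simp [toAdd_mul]
    ring

def emb : Rq →+* Sq := (AddMonoidAlgebra.lift ℤ Sq ℤ qPow).toRingHom

def DeltaPlusLow (s : Sq) (δ : ℤ) : Prop :=
  s.coeff 0 = δ ∧ ∀ n : ℤ, n < 0 → s.coeff n = 0

lemma bar_apply (r : Rq) (n : ℤ) : (bar r).coeff n = r.coeff (-n) := LaurentPolynomial.invert_apply r n

lemma emb_single (n : ℤ) (a : ℤ) :
    emb (AddMonoidAlgebra.single n a : Rq) = HahnSeries.single (-n) a := by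
  show (AddMonoidAlgebra.lift ℤ Sq ℤ qPow) (AddMonoidAlgebra.single n a) = _
  rw [AddMonoidAlgebra.lift_single]
  have hq : qPow (Multiplicative.ofAdd n) = HahnSeries.single (-n) (1:ℤ) := rfl
  rw [hq]
  rw [Algebra.smul_def, eq_intCast]
  have hcast : ((a : ℤ) : Sq) = HahnSeries.single 0 a := by
    have := map_intCast (HahnSeries.C : ℤ →+* Sq) a
    rw [Int.cast_id] at this
    exact this.symm
  rw [hcast, HahnSeries.single_mul_single]
  simp

lemma sumCoeff {α : Type*} (s : Finset α) (g : α → Sq) (m : ℤ) :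
    (∑ i ∈ s, g i).coeff m = ∑ i ∈ s, (g i).coeff m :=
  map_sum (HahnSeries.coeff.addMonoidHom m) g s

lemma emb_eq_sum (r : Rq) :
    emb r = ∑ n ∈ r.coeff.support, HahnSeries.single (-n) (r.coeff n) := by
  conv_lhs => rw [← AddMonoidAlgebra.sum_coeff_single r]
  rw [map_finsuppSum, Finsupp.sum]
  exact Finset.sum_congr rfl fun n _ => emb_single n (r.coeff n)

lemma emb_coeff (r : Rq) (m : ℤ) : (emb r).coeff m = r.coeff (-m) := by
  rw [emb_eq_sum, sumCoeff]
  rw [Finset.sum_eq_single (-m)]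
  · simp [HahnSeries.coeff_single]
  · intro n hn hne
    have : m ≠ -n := fun h => hne (by omega)
    simp [HahnSeries.coeff_single, this]
  · intro h
    simp [Finsupp.notMem_support_iff.mp h]

lemma emb_mul_coeff (r : Rq) (x : Sq) (m : ℤ) :
    (emb r * x).coeff m = ∑ n ∈ r.coeff.support, r.coeff n * x.coeff (m + n) := by
  rw [emb_eq_sum, Finset.sum_mul, sumCoeff]
  refine Finset.sum_congr rfl fun n _ => ?_
  have h := HahnSeries.coeff_single_mul_add (r := r.coeff n) (x := x) (a := m + n) (b := -n)
  simpa using h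


lemma inner_top (g : Rq) (x : Sq) (M2 : ℤ) (hg : ∀ n ∈ g.coeff.support, n ≤ M2)
    (hx : ∀ n : ℤ, n < 0 → x.coeff n = 0) :
    ∑ n ∈ g.coeff.support, g.coeff n * x.coeff (-M2 + n) = g.coeff M2 * x.coeff 0 := by
  rw [Finset.sum_eq_single M2]
  · norm_num
  · intro n hn hne
    rw [hx _ (by have := hg n hn; omega), mul_zero]
  · intro h
    rw [Finsupp.notMem_support_iff.mp h, zero_mul]

lemma mul_apply_top (p r : Rq) (M : ℤ) (hp : ∀ n ∈ p.coeff.support, n ≤ M)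
    (hr : ∀ n ∈ r.coeff.support, n ≤ M) : (p * r).coeff (M + M) = p.coeff M * r.coeff M := by
  have h1 : (p * r).coeff (M + M) = (emb (p * r)).coeff (-(M + M)) := by
    rw [emb_coeff, neg_neg]
  rw [h1, map_mul, emb_mul_coeff]
  rw [Finset.sum_eq_single M]
  · rw [emb_coeff]
    norm_num
  · intro n hn hne
    have hz : r.coeff (-(-(M + M) + n)) = 0 := by
      apply Finsupp.notMem_support_iff.mp
      intro hmem
      have := hr _ hmem
      have := hp _ hn
      omega
    rw [emb_coeff, hz, mul_zero]
  · intro h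
    rw [Finsupp.notMem_support_iff.mp h, zero_mul]

lemma int_sq_sum {C : Type*} [Fintype C] (a : C → ℤ) (h : ∑ c, a c * a c = 1) :
    ∃ c, (a c = 1 ∨ a c = -1) ∧ ∀ c', c' ≠ c → a c' = 0 := by
  have hex : ∃ c, a c ≠ 0 := by
    by_contra h0
    push_neg at h0
    simp [h0] at h
  obtain ⟨c, hc⟩ := hex
  have hle : a c * a c ≤ 1 := by
    rw [← h]
    exact Finset.single_le_sum (fun c' _ => mul_self_nonneg (a c')) (Finset.mem_univ c)
  have h1 : a c * a c = 1 := by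
    rcases hc.lt_or_gt with h'|h' <;> nlinarith
  refine ⟨c, mul_self_eq_one_iff.mp h1, ?_⟩
  intro c' hne
  have hz : ∑ c'' ∈ Finset.univ.erase c, a c'' * a c'' = 0 := by
    have h2 := Finset.add_sum_erase Finset.univ (fun c'' => a c'' * a c'') (Finset.mem_univ c)
    omega
  have := (Finset.sum_eq_zero_iff_of_nonneg
    (fun x _ => mul_self_nonneg (a x))).mp hz c' (Finset.mem_erase.mpr ⟨hne, Finset.mem_univ _⟩)
  exact mul_self_eq_zero.mp this

variable {C : Type*} [PartialOrder C] {V : Type*} [AddCommGroup V] [Module Rq V]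

structure Precanonical (C : Type*) [PartialOrder C] (V : Type*) [AddCommGroup V]
    [Module Rq V] where
  ψ : V →+ V
  ψ_invol : ∀ v, ψ (ψ v) = v
  ψ_antilinear : ∀ (r : Rq) (v : V), ψ (r • v) = bar r • ψ v
  pair : V →+ V →+ Sq
  pair_sesq_left : ∀ (r : Rq) (u v : V), pair (r • u) v = emb (bar r) * pair u v
  pair_sesq_right : ∀ (r : Rq) (u v : V), pair u (r • v) = emb r * pair u v
  flip_unitary : ∀ u v : V, pair u v = pair (ψ v) (ψ u)
  std : Module.Basis C Rq V
  ψ_upper : ∀ c : C,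
    ψ (std c) - std c ∈ Submodule.span Rq (std '' {c' : C | c' < c})

structure IsCanonicalBasis (P : Precanonical C V) (b : Module.Basis C Rq V) : Prop where
  bar_invariant : ∀ c : C, P.ψ (b c) = b c
  upper_triangular : ∀ c : C,
    b c - P.std c ∈ Submodule.span Rq (P.std '' {c' : C | c' < c})
  almost_orthonormal : ∀ c c' : C,
    DeltaPlusLow (P.pair (b c) (b c')) (if c = c' then 1 else 0)

/-- If `V` is finitely generated (the index set `C` is finite),
`b` is a canonical basis, `ψ(v) = v`, and `⟨v,v⟩ ∈ 1 + q⁻¹ℤ[q⁻¹]`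
(coefficient of `q⁰` is `1`, no positive powers of `q`, and finitely many
nonzero coefficients), then `v` or `-v` is a canonical basis vector. -/
theorem canonical_sign [Fintype C] (P : Precanonical C V) (b : Module.Basis C Rq V)
    (hb : IsCanonicalBasis P b) (v : V)
    (hbar : P.ψ v = v)
    (hcoeff0 : (P.pair v v).coeff 0 = 1)
    (hneg : ∀ n : ℤ, n < 0 → (P.pair v v).coeff n = 0)
    (hpoly : (Function.support (P.pair v v).coeff).Finite) :
    ∃ c : C, v = b c ∨ v = - b c := by
  classical
  set f : C → Rq := fun c => b.repr v c with hfdef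
  have hv : ∑ c, f c • b c = v := b.sum_repr v
  have hψ : P.ψ v = ∑ c, bar (f c) • b c := by
    conv_lhs => rw [← hv]
    rw [map_sum]
    exact Finset.sum_congr rfl fun c _ => by rw [P.ψ_antilinear, hb.bar_invariant]
  have hbarf : ∀ c, bar (f c) = f c := by
    intro c
    have h2 : (∑ c', bar (f c') • b c') = v := by rw [← hψ, hbar]
    calc bar (f c) = b.repr (∑ c', bar (f c') • b c') c :=
          (congrFun (b.repr_sum_self fun c' => bar (f c')) c).symm
      _ = b.repr v c := by rw [h2]
      _ = f c := rfl
  have hpair : P.pair v v = ∑ c, ∑ c', emb (f c * f c') * P.pair (b c) (b c') := by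
    conv_lhs => rw [← hv]
    rw [map_sum P.pair _ Finset.univ, AddMonoidHom.finset_sum_apply]
    refine Finset.sum_congr rfl fun c _ => ?_
    rw [map_sum]
    refine Finset.sum_congr rfl fun c' _ => ?_
    rw [P.pair_sesq_left, P.pair_sesq_right, hbarf, map_mul, mul_assoc]
  have hcoeff : ∀ m : ℤ, (P.pair v v).coeff m =
      ∑ c, ∑ c', ∑ n ∈ (f c * f c').coeff.support,
        (f c * f c').coeff n * (P.pair (b c) (b c')).coeff (m + n) := by
    intro m
    rw [hpair, sumCoeff]
    refine Finset.sum_congr rfl fun c _ => ?_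
    rw [sumCoeff]
    exact Finset.sum_congr rfl fun c' _ => emb_mul_coeff _ _ m
  have hsym : ∀ c (n : ℤ), (f c).coeff n = (f c).coeff (-n) := by
    intro c n
    conv_lhs => rw [← hbarf c]
    exact bar_apply (f c) n
  by_cases hsupp : ∀ c : C, (f c).coeff.support ⊆ ({0} : Finset ℤ)
  · -- all coefficients are constants
    set a : C → ℤ := fun c => (f c).coeff 0 with hadef
    have hfc : ∀ c, f c = AddMonoidAlgebra.single 0 (a c) := fun c =>
      AddMonoidAlgebra.coeff_injective (Finsupp.support_subset_singleton.mp (hsupp c))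
    have hmul : ∀ c c', f c * f c' = (AddMonoidAlgebra.single 0 (a c * a c') : Rq) := by
      intro c c'
      rw [hfc c, hfc c']
      rw [AddMonoidAlgebra.single_mul_single]
      norm_num
    have inner : ∀ (k : ℤ) (x : Sq),
        ∑ n ∈ (AddMonoidAlgebra.single 0 k : Rq).coeff.support,
          (AddMonoidAlgebra.single 0 k : Rq).coeff n * x.coeff (0 + n) = k * x.coeff 0 := by
      intro k x
      rcases eq_or_ne k 0 with h | h
      · simp [h]
      · rw [AddMonoidAlgebra.coeff_single, Finsupp.support_single_ne_zero _ h, Finset.sum_singleton,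
          Finsupp.single_eq_same, zero_add]
    have hsum : ∑ c, a c * a c = 1 := by
      have h0 := hcoeff 0
      rw [hcoeff0] at h0
      have : ∀ c c' : C, (∑ n ∈ (f c * f c').coeff.support,
          (f c * f c').coeff n * (P.pair (b c) (b c')).coeff (0 + n))
          = a c * a c' * (if c = c' then 1 else 0) := by
        intro c c'
        rw [hmul c c', inner, (hb.almost_orthonormal c c').1]
      rw [Finset.sum_congr rfl (fun c _ => Finset.sum_congr rfl fun c' _ => this c c')] at h0
      simp only [mul_ite, mul_one, mul_zero, Finset.sum_ite_eq, Finset.mem_univ,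
        if_true] at h0
      exact h0.symm
    obtain ⟨c, hc1, hc0⟩ := int_sq_sum a hsum
    refine ⟨c, ?_⟩
    have hvc : v = f c • b c := by
      rw [← hv]
      refine Finset.sum_eq_single_of_mem c (Finset.mem_univ c) fun c' _ hne => ?_
      rw [hfc c', hc0 c' hne]
      simp
    rcases hc1 with h1 | h1
    · left
      rw [hvc, hfc c, h1]
      rw [show (AddMonoidAlgebra.single (0:ℤ) (1:ℤ) : Rq) = (1:Rq) from AddMonoidAlgebra.one_def.symm,
        one_smul]
    · right
      rw [hvc, hfc c, h1]
      rw [show (AddMonoidAlgebra.single (0:ℤ) (-1:ℤ) : Rq) = -(1:Rq) by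
        rw [AddMonoidAlgebra.single_neg, AddMonoidAlgebra.one_def], neg_one_smul]
  · -- there is a nonzero power; derive a contradiction
    exfalso
    push_neg at hsupp
    obtain ⟨c0, hc0⟩ := hsupp
    rw [Finset.not_subset] at hc0
    obtain ⟨n0, hn0mem, hn0⟩ := hc0
    have hn0ne : n0 ≠ 0 := by simpa using hn0
    set T : Finset ℤ := Finset.univ.biUnion (fun c : C => (f c).coeff.support) with hTdef
    have hmemT : ∀ c (n : ℤ), n ∈ (f c).coeff.support → n ∈ T := fun c n h =>
      Finset.mem_biUnion.mpr ⟨c, Finset.mem_univ c, h⟩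
    have hTne : T.Nonempty := ⟨n0, hmemT c0 n0 hn0mem⟩
    set M : ℤ := T.max' hTne with hMdef
    have hle : ∀ c (n : ℤ), n ∈ (f c).coeff.support → n ≤ M := fun c n h =>
      Finset.le_max' T n (hmemT c n h)
    have hsymm_mem : ∀ c (n : ℤ), n ∈ (f c).coeff.support → -n ∈ (f c).coeff.support := by
      intro c n h
      rw [Finsupp.mem_support_iff] at h ⊢
      rw [← hsym]
      exact h
    have hMpos : 0 < M := by
      have h1 := hle c0 n0 hn0mem
      have h2 := hle c0 (-n0) (hsymm_mem c0 n0 hn0mem)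
      omega
    -- the coefficient of the pairing at -(M+M)
    have hMsupport : ∀ c c' : C, ∀ n ∈ (f c * f c').coeff.support, n ≤ M + M := by
      intro c c' n hn
      have := AddMonoidAlgebra.support_coeff_mul_subset (f c) (f c') hn
      rw [Finset.mem_add] at this
      obtain ⟨i, hi, j, hj, hij⟩ := this
      have := hle c i hi
      have := hle c' j hj
      omega
    have hM2 : (P.pair v v).coeff (-(M + M)) = 0 := hneg _ (by omega)
    rw [hcoeff] at hM2
    have hterm : ∀ c c' : C, (∑ n ∈ (f c * f c').coeff.support,
        (f c * f c').coeff n * (P.pair (b c) (b c')).coeff (-(M + M) + n))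
        = (f c).coeff M * (f c').coeff M * (if c = c' then 1 else 0) := by
      intro c c'
      rw [inner_top _ _ _ (hMsupport c c') (hb.almost_orthonormal c c').2,
        mul_apply_top _ _ M (hle c) (hle c'), (hb.almost_orthonormal c c').1]
    rw [Finset.sum_congr rfl (fun c _ => Finset.sum_congr rfl fun c' _ => hterm c c')] at hM2
    simp only [mul_ite, mul_one, mul_zero, Finset.sum_ite_eq, Finset.mem_univ, if_true] at hM2
    -- but M is attained in some support, so the sum of squares is positive
    obtain ⟨c1, _, hc1⟩ := Finset.mem_biUnion.mp (T.max'_mem hTne)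
    have hne : (f c1).coeff M ≠ 0 := Finsupp.mem_support_iff.mp hc1
    have hzero : (f c1).coeff M * (f c1).coeff M = 0 :=
      (Finset.sum_eq_zero_iff_of_nonneg (fun x _ => mul_self_nonneg ((f x).coeff M))).mp
        hM2 c1 (Finset.mem_univ c1)
    exact hne (mul_self_eq_zero.mp hzero)
end
end

section
/- Suppose a pre-canonical structure on a free Z[q,q⁻¹]-module V is almost balanced, meaning ⟨ψ(a_c),a_d⟩ ∈ δ_{c,d} + q⁻¹Z[[q⁻¹]]. Then for a family {b_c} satisfying condition (I) (ψ-invariance), conditions (II) and (III) together are equivalent to condition (II'): b_c ∈ a_c + Σ_{c'<c} q⁻¹Z[q⁻¹]·a_{c'}. -/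
/-!
Statement 3: for an almost balanced pre-canonical structure on a free
`ℤ[q,q⁻¹]`-module, and a `ψ`-invariant basis `{b_c}`, conditions (II)+(III)
are together equivalent to condition (II').  Conventions as in the other files:
`ℤ[q,q⁻¹] = LaurentPolynomial ℤ`, `ℤ((q⁻¹)) = LaurentSeries ℤ` with the
Laurent-series variable standing for `q⁻¹`.
-/

noncomputable section

open LaurentPolynomial HahnSeries
open scoped Classical

variable {C : Type*} [PartialOrder C] {V : Type*} [AddCommGroup V] [Module Rq V]

/-- The pre-canonical structure is almost balanced:
`⟨ψ(a_c), a_d⟩ ∈ δ_{c,d} + q⁻¹ℤ[[q⁻¹]]`. -/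
def AlmostBalanced (P : Precanonical C V) : Prop :=
  ∀ c d : C, DeltaPlusLow (P.pair (P.ψ (P.std c)) (P.std d)) (if c = d then 1 else 0)

/-- Condition (II): `b_c ∈ a_c + Σ_{c'<c} ℤ[q,q⁻¹]·a_{c'}`. -/
def CondII (P : Precanonical C V) (b : Module.Basis C Rq V) : Prop :=
  ∀ c : C, b c - P.std c ∈ Submodule.span Rq (P.std '' {c' : C | c' < c})

/-- Condition (III): `⟨b_c, b_{c'}⟩ ∈ δ_{c,c'} + q⁻¹ℤ[[q⁻¹]]`. -/
def CondIII (P : Precanonical C V) (b : Module.Basis C Rq V) : Prop :=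
  ∀ c c' : C, DeltaPlusLow (P.pair (b c) (b c')) (if c = c' then 1 else 0)

/-- Condition (II'): `b_c ∈ a_c + Σ_{c'<c} q⁻¹ℤ[q⁻¹]·a_{c'}`, expressed in terms
of the coordinates of `b_c` in the standard basis: the coordinate at `c` is `1`,
nonzero coordinates at `c' ≠ c` occur only for `c' < c`, and those coordinates
are Laurent polynomials with vanishing coefficients in degrees `≥ 0`. -/
def CondII' (P : Precanonical C V) (b : Module.Basis C Rq V) : Prop :=
  ∀ c : C, (P.std.repr (b c)) c = 1 ∧
    ∀ c' : C, c' ≠ c →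
      ((P.std.repr (b c)) c' ≠ 0 → c' < c) ∧
      (∀ k : ℤ, 0 ≤ k → AddMonoidAlgebra.coeff ((P.std.repr (b c)) c') k = 0)

section Aux

lemma bar_bar (r : Rq) : bar (bar r) = r := LaurentPolynomial.involutive_invert r

lemma emb_coeff_s3 (p : Rq) (n : ℤ) : (emb p).coeff n = p.coeff (-n) := by
  have h1 : emb p = p.coeff.sum fun a c => (HahnSeries.single (-a) c : Sq) := by
    show (AddMonoidAlgebra.lift ℤ Sq ℤ qPow) p = _
    rw [AddMonoidAlgebra.lift_apply']
    apply Finsupp.sum_congr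
    intro a _
    have hC : algebraMap ℤ Sq (p.coeff a) = HahnSeries.single 0 (p.coeff a) := by
      rw [eq_intCast (algebraMap ℤ Sq), ← eq_intCast (HahnSeries.C (Γ := ℤ) (R := ℤ))]
      rfl
    have hq : qPow (Multiplicative.ofAdd a) = (HahnSeries.single (-a) (1:ℤ) : Sq) := rfl
    rw [hC, hq, HahnSeries.single_mul_single, zero_add, mul_one]
  have h2 : ((p.coeff.sum fun a c => (HahnSeries.single (-a) c : Sq)).coeff n)
      = p.coeff.sum fun a c => (HahnSeries.single (-a) c : Sq).coeff n :=
    map_finsuppSum (HahnSeries.coeff.addMonoidHom n) p.coeff _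
  rw [h1, h2]
  have h3 : (p.coeff.sum fun a c => (HahnSeries.single (-a) c : Sq).coeff n)
      = p.coeff.sum fun a c => if a = -n then c else 0 := by
    apply Finsupp.sum_congr
    intro a _
    rw [HahnSeries.coeff_single]
    rcases eq_or_ne a (-n) with h | h
    · simp [h]
    · have : n ≠ -a := by omega
      simp [h, this]
  rw [h3, Finsupp.sum_ite_eq' p.coeff (-n) (fun _ c => c)]
  split_ifs with h
  · rfl
  · rw [Finsupp.notMem_support_iff.mp h]

lemma coeff_sum {α : Type*} (s : Finset α) (f : α → Sq) (n : ℤ) :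
    (∑ x ∈ s, f x).coeff n = ∑ x ∈ s, (f x).coeff n :=
  map_sum (HahnSeries.coeff.addMonoidHom n) f s

lemma mul_coeff_lt {x y : Sq} {a b n : ℤ} (hx : ∀ i < a, x.coeff i = 0)
    (hy : ∀ j < b, y.coeff j = 0) (hn : n < a + b) : (x * y).coeff n = 0 := by
  rw [HahnSeries.coeff_mul]
  apply Finset.sum_eq_zero
  rintro ⟨i, j⟩ hij
  rw [Finset.mem_addAntidiagonal] at hij
  obtain ⟨_, _, hsum⟩ := hij
  rcases lt_or_ge i a with h | h
  · rw [hx i h, zero_mul]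
  · rw [hy j (by omega), mul_zero]

lemma mul_coeff_eq {x y : Sq} {a b : ℤ} (hx : ∀ i < a, x.coeff i = 0)
    (hy : ∀ j < b, y.coeff j = 0) : (x * y).coeff (a + b) = x.coeff a * y.coeff b := by
  rw [HahnSeries.coeff_mul]
  rw [Finset.sum_eq_single (a, b)]
  · rintro ⟨i, j⟩ hij hne
    rw [Finset.mem_addAntidiagonal] at hij
    obtain ⟨_, _, hsum⟩ := hij
    rcases lt_or_ge i a with h | h
    · rw [hx i h, zero_mul]
    rcases lt_or_ge j b with h' | h'
    · rw [hy j h', mul_zero]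
    · exact absurd (Prod.ext (by omega : i = a) (by omega : j = b)) hne
  · intro hab
    rw [Finset.mem_addAntidiagonal] at hab
    by_cases h1 : x.coeff a = 0
    · rw [h1, zero_mul]
    by_cases h2 : y.coeff b = 0
    · rw [h2, mul_zero]
    exact absurd ⟨h1, h2, rfl⟩ hab

lemma triple_coeff_lt {x y z : Sq} {a b c n : ℤ} (hx : ∀ i < a, x.coeff i = 0)
    (hy : ∀ j < b, y.coeff j = 0) (hz : ∀ k < c, z.coeff k = 0) (hn : n < a + b + c) :
    (x * (y * z)).coeff n = 0 :=
  mul_coeff_lt hx (fun j hj => mul_coeff_lt hy hz hj) (by omega)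

lemma triple_coeff_eq {x y z : Sq} {a b c : ℤ} (hx : ∀ i < a, x.coeff i = 0)
    (hy : ∀ j < b, y.coeff j = 0) (hz : ∀ k < c, z.coeff k = 0) :
    (x * (y * z)).coeff (a + b + c) = x.coeff a * (y.coeff b * z.coeff c) := by
  have h1 : ∀ j < b + c, (y * z).coeff j = 0 := fun j hj => mul_coeff_lt hy hz hj
  have := mul_coeff_eq hx h1
  rw [mul_coeff_eq hy hz] at this
  rw [show a + b + c = a + (b + c) by ring, this]

end Aux


section Expand

variable {C : Type*} [PartialOrder C] {V : Type*} [AddCommGroup V] [Module Rq V]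

lemma repr_sum (P : Precanonical C V) (v : V) :
    v = ∑ c' ∈ (P.std.repr v).support, ((P.std.repr v) c') • P.std c' := by
  conv_lhs => rw [← P.std.linearCombination_repr v]
  rw [Finsupp.linearCombination_apply, Finsupp.sum]

lemma pair_sum_left (P : Precanonical C V) {α : Type*} (s : Finset α) (u : α → V) (w : V) :
    P.pair (∑ i ∈ s, u i) w = ∑ i ∈ s, P.pair (u i) w := by
  have := map_sum (P.pair.flip w) u s
  simpa using this

lemma pair_expand (P : Precanonical C V) (v w : V) :
    P.pair (P.ψ v) w = ∑ c' ∈ (P.std.repr v).support, ∑ d' ∈ (P.std.repr w).support,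
      emb ((P.std.repr v) c') *
        (emb ((P.std.repr w) d') * P.pair (P.ψ (P.std c')) (P.std d')) := by
  have hv : P.ψ v = ∑ c' ∈ (P.std.repr v).support,
      bar ((P.std.repr v) c') • P.ψ (P.std c') := by
    conv_lhs => rw [repr_sum P v]
    rw [map_sum]
    exact Finset.sum_congr rfl fun c' _ => P.ψ_antilinear _ _
  rw [hv, pair_sum_left]
  refine Finset.sum_congr rfl fun c' _ => ?_
  rw [P.pair_sesq_left, bar_bar]
  have hw : P.pair (P.ψ (P.std c')) w = ∑ d' ∈ (P.std.repr w).support,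
      emb ((P.std.repr w) d') * P.pair (P.ψ (P.std c')) (P.std d') := by
    conv_lhs => rw [repr_sum P w]
    rw [map_sum]
    exact Finset.sum_congr rfl fun d' _ => P.pair_sesq_right _ _ _
  rw [hw, Finset.mul_sum]

end Expand

/-- For an almost balanced pre-canonical structure and a
`ψ`-invariant basis `{b_c}` (condition (I)), conditions (II) and (III) together
are equivalent to condition (II'). -/
theorem condII_III_iff_II' (P : Precanonical C V) (hP : AlmostBalanced P)
    (b : Module.Basis C Rq V) (hI : ∀ c : C, P.ψ (b c) = b c) :
    (CondII P b ∧ CondIII P b) ↔ CondII' P b := by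
  constructor
  · rintro ⟨h2, h3⟩
    intro c
    have hmem := (Module.Basis.mem_span_image (b := P.std)).mp (h2 c)
    have hrepr : P.std.repr (b c) - Finsupp.single c 1 = P.std.repr (b c - P.std c) := by
      rw [map_sub, P.std.repr_self]
    have hlt : ∀ c'', (P.std.repr (b c)) c'' ≠ Finsupp.single c (1 : Rq) c'' → c'' < c := by
      intro c'' h
      have hs : c'' ∈ (P.std.repr (b c - P.std c)).support := by
        rw [← hrepr, Finsupp.mem_support_iff, Finsupp.sub_apply]
        exact sub_ne_zero.mpr h
      exact hmem hs
    have hcc : (P.std.repr (b c)) c = 1 := by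
      by_contra h
      exact lt_irrefl c (hlt c (by rw [Finsupp.single_eq_same]; exact h))
    have hsupp : ∀ c', c' ≠ c → (P.std.repr (b c)) c' ≠ 0 → c' < c := by
      intro c' hne h
      exact hlt c' (by rwa [Finsupp.single_eq_of_ne' (Ne.symm hne)])
    refine ⟨hcc, fun c' hne => ⟨hsupp c' hne, ?_⟩⟩
    set p := P.std.repr (b c) with hp
    set S := p.support with hS
    obtain ⟨N, hN⟩ : ∃ N : ℤ, ∀ (c'' : C) (n : ℤ), n < N → (emb (p c'')).coeff n = 0 := by
      classical
      set T : Finset ℤ := S.sup fun c'' => (p c'').coeff.support with hT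
      refine ⟨-((insert (0 : ℤ) T).max' (by simp)), ?_⟩
      intro c'' n hn
      rw [emb_coeff_s3]
      by_cases hc'' : c'' ∈ S
      · by_contra h
        have hmT : -n ∈ T := Finset.mem_sup.mpr ⟨c'', hc'', Finsupp.mem_support_iff.mpr h⟩
        have hle := Finset.le_max' (insert 0 T) (-n) (Finset.mem_insert_of_mem hmT)
        omega
      · rw [Finsupp.notMem_support_iff.mp hc'']
        simp
    have key : ∀ n : ℤ, n ≤ 0 → (∀ i < n, ∀ c'', c'' ≠ c → (emb (p c'')).coeff i = 0) →
        ∀ c'', c'' ≠ c → (emb (p c'')).coeff n = 0 := by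
      intro n hn0 ih c'' hne
      have hall : ∀ e : C, ∀ i < n, (emb (p e)).coeff i = 0 := by
        intro e i hi
        by_cases he : e = c
        · subst he
          rw [emb_coeff_s3, hcc, AddMonoidAlgebra.one_def, AddMonoidAlgebra.coeff_single, Finsupp.single_apply,
            if_neg (by omega)]
        · exact ih i hi e he
      have hpair := pair_expand P (b c) (b c)
      rw [hI c] at hpair
      rw [← hp] at hpair
      have hterm : ∀ c1 ∈ S, ∀ d1 ∈ S,
          (emb (p c1) * (emb (p d1) * (P.pair (P.ψ (P.std c1))) (P.std d1))).coeff (2*n)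
          = (emb (p c1)).coeff n * ((emb (p d1)).coeff n * (if c1 = d1 then 1 else 0)) := by
        intro c1 _ d1 _
        rw [show 2*n = n + n + 0 by ring,
          triple_coeff_eq (hall c1) (hall d1) (fun i hi => (hP c1 d1).2 i hi), (hP c1 d1).1]
      have hsum : ((P.pair (b c)) (b c)).coeff (2*n)
          = ∑ c1 ∈ S, (emb (p c1)).coeff n * (emb (p c1)).coeff n := by
        rw [hpair, _root_.coeff_sum]
        refine Finset.sum_congr rfl fun c1 hc1 => ?_
        rw [_root_.coeff_sum, Finset.sum_congr rfl (fun d1 hd1 => hterm c1 hc1 d1 hd1),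
          Finset.sum_eq_single_of_mem c1 hc1]
        · rw [if_pos rfl, mul_one]
        · intro d1 _ hne1
          rw [if_neg (fun hh => hne1 hh.symm), mul_zero, mul_zero]
      have hfc : (emb (p c)).coeff n = if n = 0 then 1 else 0 := by
        rw [emb_coeff_s3, hcc, AddMonoidAlgebra.one_def, AddMonoidAlgebra.coeff_single, Finsupp.single_apply]
        by_cases h0 : n = 0
        · simp [h0]
        · rw [if_neg (by omega), if_neg h0]
      have hval : ((P.pair (b c)) (b c)).coeff (2*n) = if n = 0 then 1 else 0 := by
        rcases lt_or_eq_of_le hn0 with h | h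
        · rw [(h3 c c).2 (2*n) (by omega), if_neg (by omega)]
        · subst h
          simpa using (h3 c c).1
      have hCmem : c ∈ S := Finsupp.mem_support_iff.mpr (by rw [hcc]; exact one_ne_zero)
      have hErase : ∑ c1 ∈ S.erase c, (emb (p c1)).coeff n * (emb (p c1)).coeff n = 0 := by
        have hins := Finset.add_sum_erase S
          (fun c1 => (emb (p c1)).coeff n * (emb (p c1)).coeff n) hCmem
        rw [hsum] at hval
        rw [hfc, hval] at hins
        rcases eq_or_ne n 0 with h0 | h0
        · rw [if_pos h0] at hins
          omega
        · rw [if_neg h0] at hins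
          omega
      by_cases hc2 : c'' ∈ S
      · exact mul_self_eq_zero.mp ((Finset.sum_eq_zero_iff_of_nonneg
          (fun i _ => mul_self_nonneg _)).mp hErase c'' (Finset.mem_erase.mpr ⟨hne, hc2⟩))
      · rw [Finsupp.notMem_support_iff.mp hc2, map_zero, HahnSeries.coeff_zero]
    have main : ∀ j : ℕ, ∀ n : ℤ, n ≤ 0 → n < N + j → ∀ c'', c'' ≠ c →
        (emb (p c'')).coeff n = 0 := by
      intro j
      induction j with
      | zero => intro n _ hn c'' _; exact hN c'' n (by omega)
      | succ j ih =>
        intro n hn0 hnj c'' hne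
        rcases lt_or_ge n (N + j) with h | h
        · exact ih n hn0 h c'' hne
        · exact key n hn0 (fun i hi e he => ih i (by omega) (by omega) e he) c'' hne
    intro k hk
    have hm := main (-k - N + 1).toNat (-k) (by omega)
      (by have := Int.self_le_toNat (-k - N + 1); omega) c' hne
    rw [emb_coeff_s3, neg_neg] at hm
    exact hm
  · intro h2'
    have hcoeff0 : ∀ c c' : C, ∀ i : ℤ, i ≤ 0 → (emb ((P.std.repr (b c)) c')).coeff i
        = if c' = c ∧ i = 0 then 1 else 0 := by
      intro c c' i hi
      rw [emb_coeff_s3]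
      by_cases h : c' = c
      · subst h
        rw [(h2' c').1, AddMonoidAlgebra.one_def, AddMonoidAlgebra.coeff_single, Finsupp.single_apply]
        by_cases h0 : i = 0
        · simp [h0]
        · rw [if_neg (by omega), if_neg (by tauto)]
      · rw [((h2' c).2 c' h).2 (-i) (by omega), if_neg (by tauto)]
    have hlow : ∀ c c' : C, ∀ i : ℤ, i < 0 → (emb ((P.std.repr (b c)) c')).coeff i = 0 := by
      intro c c' i hi
      rw [hcoeff0 c c' i (le_of_lt hi), if_neg (by rintro ⟨-, h0⟩; omega)]
    constructor
    · intro c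
      rw [Module.Basis.mem_span_image]
      intro c'' hc''
      rw [Finset.mem_coe, Finsupp.mem_support_iff, map_sub, Finsupp.sub_apply,
        P.std.repr_self] at hc''
      rcases eq_or_ne c'' c with rfl | hne
      · rw [(h2' c'').1, Finsupp.single_eq_same] at hc''
        exact absurd (sub_self 1) hc''
      · rw [Finsupp.single_eq_of_ne' (Ne.symm hne), sub_zero] at hc''
        exact ((h2' c).2 c'' hne).1 hc''
    · intro c d
      have hpair := pair_expand P (b c) (b d)
      rw [hI c] at hpair
      have hcs : c ∈ (P.std.repr (b c)).support :=
        Finsupp.mem_support_iff.mpr (by rw [(h2' c).1]; exact one_ne_zero)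
      have hds : d ∈ (P.std.repr (b d)).support :=
        Finsupp.mem_support_iff.mpr (by rw [(h2' d).1]; exact one_ne_zero)
      constructor
      · rw [hpair, _root_.coeff_sum]
        rw [Finset.sum_eq_single_of_mem c hcs]
        · rw [_root_.coeff_sum, Finset.sum_eq_single_of_mem d hds]
          · rw [show (0:ℤ) = 0 + 0 + 0 by ring,
              triple_coeff_eq (fun i hi => hlow c c i hi) (fun i hi => hlow d d i hi)
                (fun i hi => (hP c d).2 i hi)]
            rw [hcoeff0 c c 0 le_rfl, hcoeff0 d d 0 le_rfl, (hP c d).1]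
            simp
          · intro d' _ hne
            rw [show (0:ℤ) = 0 + 0 + 0 by ring,
              triple_coeff_eq (fun i hi => hlow c c i hi) (fun i hi => hlow d d' i hi)
                (fun i hi => (hP c d').2 i hi)]
            rw [hcoeff0 d d' 0 le_rfl, if_neg (by tauto), zero_mul, mul_zero]
            ring
        · intro c' _ hne
          rw [_root_.coeff_sum]
          apply Finset.sum_eq_zero
          intro d' _
          rw [show (0:ℤ) = 0 + 0 + 0 by ring,
            triple_coeff_eq (fun i hi => hlow c c' i hi) (fun i hi => hlow d d' i hi)
              (fun i hi => (hP c' d').2 i hi)]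
          rw [hcoeff0 c c' 0 le_rfl, if_neg (by tauto), zero_mul]
          ring
      · intro m hm
        rw [hpair, _root_.coeff_sum]
        apply Finset.sum_eq_zero
        intro c' _
        rw [_root_.coeff_sum]
        apply Finset.sum_eq_zero
        intro d' _
        exact triple_coeff_lt (fun i hi => hlow c c' i hi) (fun i hi => hlow d d' i hi)
          (fun i hi => (hP c' d').2 i hi) (by omega)

end
end
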